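/- Let D = A₂(ℂ) be the Weyl algebra on the variables x₀, x₁ and set ∇ = x₀∂₀ + x₁∂₁. Then the left ideals K_n := D·(x₀∂₀)^n + D·∇ form a strictly decreasing chain K₀ ⊋ K₁ ⊋ K₂ ⊋ ⋯; in particular the left D-module D/D∇ does not have finite length. -/

import Mathlib

/-! STATEMENT 17: in the Weyl algebra `D = A₂(ℂ)` with `∇ = x₀∂₀ + x₁∂₁`, the left
ideals `K_n = D·(x₀∂₀)^n + D·∇` form a strictly decreasing chain; in particular the
left `D`-module `D/D∇` does not have finite length. -/

open MvPolynomial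

set_option maxHeartbeats 1000000
set_option synthInstance.maxHeartbeats 400000

noncomputable section

/-- The polynomial ring `ℂ[x₀, x₁]`. -/
abbrev P2 : Type := MvPolynomial (Fin 2) ℂ

/-- The multiplication operator `xᵢ` on `ℂ[x₀,x₁]`. -/
noncomputable def xop (i : Fin 2) : Module.End ℂ P2 := LinearMap.mulLeft ℂ (X i)

/-- The partial derivative operator `∂ᵢ` on `ℂ[x₀,x₁]`. -/
noncomputable def dop (i : Fin 2) : Module.End ℂ P2 := (pderiv i).toLinearMap

/-- The Weyl algebra `A₂(ℂ)` realized concretely as the `ℂ`-subalgebra of the `ℂ`-linear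
endomorphisms of `ℂ[x₀,x₁]` generated by the multiplication operators `x₀, x₁` and the
partial-derivative operators `∂₀, ∂₁`. -/
noncomputable def Dsub : Subalgebra ℂ (Module.End ℂ P2) :=
  Algebra.adjoin ℂ {xop 0, xop 1, dop 0, dop 1}

/-- The Weyl algebra `D = A₂(ℂ)`. -/
noncomputable def DW : Type := Dsub

noncomputable instance : Ring DW := inferInstanceAs (Ring Dsub)
noncomputable instance : Algebra ℂ DW := inferInstanceAs (Algebra ℂ Dsub)

/-- `x₀` as an element of the Weyl algebra. -/
noncomputable def x₀ : DW := (⟨xop 0, Algebra.subset_adjoin (by simp)⟩ : Dsub)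
/-- `x₁` as an element of the Weyl algebra. -/
noncomputable def x₁ : DW := (⟨xop 1, Algebra.subset_adjoin (by simp)⟩ : Dsub)
/-- `∂₀` as an element of the Weyl algebra. -/
noncomputable def δ₀ : DW := (⟨dop 0, Algebra.subset_adjoin (by simp)⟩ : Dsub)
/-- `∂₁` as an element of the Weyl algebra. -/
noncomputable def δ₁ : DW := (⟨dop 1, Algebra.subset_adjoin (by simp)⟩ : Dsub)

/-- The left ideal `I = (x₀∂₀ - x₁∂₁, ∂₀∂₁)`. -/
noncomputable def Iid : Submodule DW DW := Submodule.span DW {x₀ * δ₀ - x₁ * δ₁, δ₀ * δ₁}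
/-- The left ideal `J₀ = (x₀∂₀, x₁∂₁, ∂₀∂₁)`. -/
noncomputable def J0 : Submodule DW DW := Submodule.span DW {x₀ * δ₀, x₁ * δ₁, δ₀ * δ₁}
/-- The left ideal `J₁ = (∂₀, x₁∂₁)`. -/
noncomputable def J1 : Submodule DW DW := Submodule.span DW {δ₀, x₁ * δ₁}
/-- The left ideal `J₂ = (x₀∂₀, ∂₁)`. -/
noncomputable def J2 : Submodule DW DW := Submodule.span DW {x₀ * δ₀, δ₁}
/-- The left ideal `J∞ = (∂₀, ∂₁)`. -/
noncomputable def Jinf : Submodule DW DW := Submodule.span DW {δ₀, δ₁}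

/-- The left ideal `K_n = D·(x₀∂₀)^n + D·∇`, where `∇ = x₀∂₀ + x₁∂₁`. -/
noncomputable def Kid (n : ℕ) : Submodule DW DW :=
  Submodule.span DW {(x₀ * δ₀) ^ n, x₀ * δ₀ + x₁ * δ₁}

namespace Stmt17Aux

abbrev Sp : Type := Polynomial (Polynomial ℂ)
abbrev Mw : Type := ℤ × ℤ →₀ Sp
abbrev Lw : Type := ℤ × ℤ →₀ ℂ
abbrev FA : Type := FreeAlgebra ℂ (Fin 4)
def lam : Sp := Polynomial.C Polynomial.X
def muv : Sp := Polynomial.X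
def cc (k : ℤ) : Sp := Polynomial.C (Polynomial.C (k : ℂ))
def mX0 : Mw →ₗ[Sp] Mw := Finsupp.lmapDomain Sp Sp (fun p => (p.1 + 1, p.2))
def mX1 : Mw →ₗ[Sp] Mw := Finsupp.lmapDomain Sp Sp (fun p => (p.1, p.2 + 1))
def mD0 : Mw →ₗ[Sp] Mw :=
  Finsupp.lsum ℕ fun p : ℤ × ℤ => (lam + cc p.1) • Finsupp.lsingle (p.1 - 1, p.2)
def mD1 : Mw →ₗ[Sp] Mw :=
  Finsupp.lsum ℕ fun p : ℤ × ℤ => (muv + cc p.2) • Finsupp.lsingle (p.1, p.2 - 1)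
def ρS : FA →ₐ[ℂ] Module.End Sp Mw := FreeAlgebra.lift ℂ ![mX0, mX1, mD0, mD1]

def uX0 : Lw →ₗ[ℂ] Lw := Finsupp.lmapDomain ℂ ℂ (fun p => (p.1 + 1, p.2))
def uX1 : Lw →ₗ[ℂ] Lw := Finsupp.lmapDomain ℂ ℂ (fun p => (p.1, p.2 + 1))
def uD0 (a : ℂ) : Lw →ₗ[ℂ] Lw :=
  Finsupp.lsum ℕ fun p : ℤ × ℤ => (a + (p.1 : ℂ)) • Finsupp.lsingle (p.1 - 1, p.2)
def uD1 (b : ℂ) : Lw →ₗ[ℂ] Lw :=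
  Finsupp.lsum ℕ fun p : ℤ × ℤ => (b + (p.2 : ℂ)) • Finsupp.lsingle (p.1, p.2 - 1)
def τ (a b : ℂ) : FA →ₐ[ℂ] Module.End ℂ Lw := FreeAlgebra.lift ℂ ![uX0, uX1, uD0 a, uD1 b]

def ε (a b : ℂ) : Sp →ₐ[ℂ] ℂ :=
  (Polynomial.aeval b).comp (Polynomial.mapAlgHom (Polynomial.aeval a))
def Tmap (a b : ℂ) : Mw →ₗ[ℂ] Lw := Finsupp.mapRange.linearMap (ε a b).toLinearMap

@[simp] lemma eps_lam (a b : ℂ) : ε a b lam = a := by simp [ε, lam]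
@[simp] lemma eps_muv (a b : ℂ) : ε a b muv = b := by simp [ε, muv]
@[simp] lemma eps_cc (a b : ℂ) (k : ℤ) : ε a b (cc k) = k := by simp [ε, cc]
@[simp] lemma Tmap_single (a b : ℂ) (p : ℤ × ℤ) (s : Sp) :
    Tmap a b (Finsupp.single p s) = Finsupp.single p (ε a b s) := by
  simp [Tmap]

@[simp] lemma mX0_single (p : ℤ × ℤ) (s : Sp) :
    mX0 (Finsupp.single p s) = Finsupp.single (p.1 + 1, p.2) s := by
  simp [mX0, Finsupp.lmapDomain_apply, Finsupp.mapDomain_single]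
@[simp] lemma mX1_single (p : ℤ × ℤ) (s : Sp) :
    mX1 (Finsupp.single p s) = Finsupp.single (p.1, p.2 + 1) s := by
  simp [mX1, Finsupp.lmapDomain_apply, Finsupp.mapDomain_single]
@[simp] lemma mD0_single (p : ℤ × ℤ) (s : Sp) :
    mD0 (Finsupp.single p s) = Finsupp.single (p.1 - 1, p.2) ((lam + cc p.1) * s) := by
  simp [mD0, Finsupp.smul_single, smul_eq_mul]
@[simp] lemma mD1_single (p : ℤ × ℤ) (s : Sp) :
    mD1 (Finsupp.single p s) = Finsupp.single (p.1, p.2 - 1) ((muv + cc p.2) * s) := by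
  simp [mD1, Finsupp.smul_single, smul_eq_mul]
@[simp] lemma uX0_single (p : ℤ × ℤ) (s : ℂ) :
    uX0 (Finsupp.single p s) = Finsupp.single (p.1 + 1, p.2) s := by
  simp [uX0, Finsupp.lmapDomain_apply, Finsupp.mapDomain_single]
@[simp] lemma uX1_single (p : ℤ × ℤ) (s : ℂ) :
    uX1 (Finsupp.single p s) = Finsupp.single (p.1, p.2 + 1) s := by
  simp [uX1, Finsupp.lmapDomain_apply, Finsupp.mapDomain_single]
@[simp] lemma uD0_single (a : ℂ) (p : ℤ × ℤ) (s : ℂ) :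
    uD0 a (Finsupp.single p s) = Finsupp.single (p.1 - 1, p.2) ((a + p.1) * s) := by
  simp [uD0, Finsupp.smul_single, smul_eq_mul]
@[simp] lemma uD1_single (b : ℂ) (p : ℤ × ℤ) (s : ℂ) :
    uD1 b (Finsupp.single p s) = Finsupp.single (p.1, p.2 - 1) ((b + p.2) * s) := by
  simp [uD1, Finsupp.smul_single, smul_eq_mul]

lemma csmul (r : ℂ) (m : Mw) : (Polynomial.C (Polynomial.C r)) • m = r • m := by
  ext p
  simp [Finsupp.smul_apply, Algebra.smul_def]

lemma claimA (a b : ℂ) (w : FA) : ∀ m : Mw, Tmap a b (ρS w m) = τ a b w (Tmap a b m) := by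
  induction w using FreeAlgebra.induction with
  | grade0 r =>
    intro m
    rw [AlgHom.commutes, AlgHom.commutes, Module.algebraMap_end_apply,
      Module.algebraMap_end_apply, map_smul]
  | grade1 i =>
    intro m
    induction m using Finsupp.induction_linear with
    | zero => simp
    | add f g hf hg => simp only [map_add, hf, hg]
    | single p s =>
      simp only [ρS, τ, FreeAlgebra.lift_ι_apply]
      fin_cases i
      · show Tmap a b (mX0 (Finsupp.single p s)) = uX0 (Tmap a b (Finsupp.single p s))
        simp only [mX0_single, Tmap_single, uX0_single]
      · show Tmap a b (mX1 (Finsupp.single p s)) = uX1 (Tmap a b (Finsupp.single p s))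
        simp only [mX1_single, Tmap_single, uX1_single]
      · show Tmap a b (mD0 (Finsupp.single p s)) = uD0 a (Tmap a b (Finsupp.single p s))
        simp only [mD0_single, Tmap_single, uD0_single, map_mul, map_add, eps_lam, eps_cc]
      · show Tmap a b (mD1 (Finsupp.single p s)) = uD1 b (Tmap a b (Finsupp.single p s))
        simp only [mD1_single, Tmap_single, uD1_single, map_mul, map_add, eps_muv, eps_cc]
  | mul x y hx hy =>
    intro m
    simp only [map_mul, Module.End.mul_apply, hx, hy]
  | add x y hx hy =>
    intro m
    simp only [map_add, LinearMap.add_apply, hx, hy]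

def ρ1 : FA →ₐ[ℂ] Module.End ℂ P2 := FreeAlgebra.lift ℂ ![xop 0, xop 1, dop 0, dop 1]

def shInc (c d : ℕ) : P2 →ₗ[ℂ] Lw :=
  (MvPolynomial.basisMonomials (Fin 2) ℂ).constr ℂ
    (fun u => Finsupp.single (((u 0 : ℕ) : ℤ) - c, ((u 1 : ℕ) : ℤ) - d) (1 : ℂ))

lemma shInc_monomial (c d : ℕ) (u : Fin 2 →₀ ℕ) (r : ℂ) :
    shInc c d (MvPolynomial.monomial u r)
      = Finsupp.single (((u 0 : ℕ) : ℤ) - c, ((u 1 : ℕ) : ℤ) - d) r := by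
  have h : MvPolynomial.monomial u r = r • (MvPolynomial.basisMonomials (Fin 2) ℂ) u := by
    simp [MvPolynomial.coe_basisMonomials, MvPolynomial.smul_monomial]
  rw [h, map_smul, shInc, Module.Basis.constr_basis, Finsupp.smul_single, smul_eq_mul, mul_one]

lemma claimB (c d : ℕ) (w : FA) :
    ∀ p : P2, τ (c : ℂ) (d : ℂ) w (shInc c d p) = shInc c d (ρ1 w p) := by
  induction w using FreeAlgebra.induction with
  | grade0 r =>
    intro p
    rw [AlgHom.commutes, AlgHom.commutes, Module.algebraMap_end_apply,
      Module.algebraMap_end_apply, map_smul]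
  | mul x y hx hy =>
    intro p
    simp only [map_mul, Module.End.mul_apply, hx, hy]
  | add x y hx hy =>
    intro p
    simp only [map_add, LinearMap.add_apply, hx, hy, map_add]
  | grade1 i =>
    have key : ∀ (g : Module.End ℂ Lw) (e : Module.End ℂ P2),
        (∀ u : Fin 2 →₀ ℕ, g (shInc c d (MvPolynomial.monomial u 1))
          = shInc c d (e (MvPolynomial.monomial u 1))) →
        ∀ p : P2, g (shInc c d p) = shInc c d (e p) := by
      intro g e h p
      have heq : (g ∘ₗ shInc c d) = ((shInc c d) ∘ₗ e) :=
        Module.Basis.ext (MvPolynomial.basisMonomials (Fin 2) ℂ) (fun u => by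
          have hu := congrFun (MvPolynomial.coe_basisMonomials (Fin 2) ℂ) u
          simp only [LinearMap.comp_apply, hu]
          exact h u)
      exact congrArg (fun T : P2 →ₗ[ℂ] Lw => T p) heq
    simp only [τ, ρ1, FreeAlgebra.lift_ι_apply]
    fin_cases i
    · refine key uX0 (xop 0) (fun u => ?_)
      have hx : xop 0 (MvPolynomial.monomial u 1)
          = MvPolynomial.monomial (Finsupp.single 0 1 + u) 1 := by
        simp only [xop, LinearMap.mulLeft_apply]
        rw [show (MvPolynomial.X 0 : P2) = MvPolynomial.monomial (Finsupp.single 0 1) 1 from rfl,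
          MvPolynomial.monomial_mul, one_mul]
      rw [shInc_monomial, hx, shInc_monomial, uX0_single]
      have e0 : ((Finsupp.single 0 1 + u : Fin 2 →₀ ℕ) 0) = 1 + u 0 := by simp
      have e1 : ((Finsupp.single 0 1 + u : Fin 2 →₀ ℕ) 1) = u 1 := by simp
      rw [e0, e1]
      congr 1
      simp only [Prod.mk.injEq]
      constructor <;> push_cast <;> ring
    · refine key uX1 (xop 1) (fun u => ?_)
      have hx : xop 1 (MvPolynomial.monomial u 1)
          = MvPolynomial.monomial (Finsupp.single 1 1 + u) 1 := by
        simp only [xop, LinearMap.mulLeft_apply]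
        rw [show (MvPolynomial.X 1 : P2) = MvPolynomial.monomial (Finsupp.single 1 1) 1 from rfl,
          MvPolynomial.monomial_mul, one_mul]
      rw [shInc_monomial, hx, shInc_monomial, uX1_single]
      have e0 : ((Finsupp.single 1 1 + u : Fin 2 →₀ ℕ) 0) = u 0 := by simp
      have e1 : ((Finsupp.single 1 1 + u : Fin 2 →₀ ℕ) 1) = 1 + u 1 := by simp
      rw [e0, e1]
      congr 1
      simp only [Prod.mk.injEq]
      constructor <;> push_cast <;> ring
    · refine key (uD0 (c : ℂ)) (dop 0) (fun u => ?_)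
      have hd : dop 0 (MvPolynomial.monomial u 1)
          = MvPolynomial.monomial (u - Finsupp.single 0 1) ((u 0 : ℂ)) := by
        simp only [dop, LinearMap.coe_mk, Derivation.coeFn_coe]
        simp [MvPolynomial.pderiv_monomial]
      rw [shInc_monomial, hd, shInc_monomial, uD0_single]
      rcases Nat.eq_zero_or_pos (u 0) with h0 | h0
      · have e0 : (u - Finsupp.single 0 1 : Fin 2 →₀ ℕ) = u := by
          ext j
          fin_cases j <;> simp [Finsupp.tsub_apply, h0]
        rw [e0, h0]
        simp
      · have e0 : (u - Finsupp.single 0 1 : Fin 2 →₀ ℕ) 0 = u 0 - 1 := by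
          simp [Finsupp.tsub_apply]
        have e1 : (u - Finsupp.single 0 1 : Fin 2 →₀ ℕ) 1 = u 1 := by
          simp [Finsupp.tsub_apply]
        rw [e0, e1]
        have hc : ((u 0 - 1 : ℕ) : ℤ) = (u 0 : ℤ) - 1 := by omega
        rw [hc]
        congr 1
        · simp only [Prod.mk.injEq]; exact ⟨by ring, trivial⟩
        · push_cast; ring
    · refine key (uD1 (d : ℂ)) (dop 1) (fun u => ?_)
      have hd : dop 1 (MvPolynomial.monomial u 1)
          = MvPolynomial.monomial (u - Finsupp.single 1 1) ((u 1 : ℂ)) := by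
        simp only [dop, LinearMap.coe_mk, Derivation.coeFn_coe]
        simp [MvPolynomial.pderiv_monomial]
      rw [shInc_monomial, hd, shInc_monomial, uD1_single]
      rcases Nat.eq_zero_or_pos (u 1) with h0 | h0
      · have e0 : (u - Finsupp.single 1 1 : Fin 2 →₀ ℕ) = u := by
          ext j
          fin_cases j <;> simp [Finsupp.tsub_apply, h0]
        rw [e0, h0]
        simp
      · have e0 : (u - Finsupp.single 1 1 : Fin 2 →₀ ℕ) 1 = u 1 - 1 := by
          simp [Finsupp.tsub_apply]
        have e1 : (u - Finsupp.single 1 1 : Fin 2 →₀ ℕ) 0 = u 0 := by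
          simp [Finsupp.tsub_apply]
        rw [e0, e1]
        have hc : ((u 1 - 1 : ℕ) : ℤ) = (u 1 : ℤ) - 1 := by omega
        rw [hc]
        congr 1
        · simp only [Prod.mk.injEq]; exact ⟨trivial, by ring⟩
        · push_cast; ring

lemma poly_vanish (N : ℕ) (p : Polynomial ℂ) (h : ∀ n : ℕ, N ≤ n → p.eval (n : ℂ) = 0) :
    p = 0 := by
  refine Polynomial.eq_zero_of_infinite_isRoot p ?_
  have hinj : Set.InjOn (fun n : ℕ => (n : ℂ)) (Set.Ici N) :=
    fun a _ b _ hab => Nat.cast_injective hab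
  have hinf : ((fun n : ℕ => (n : ℂ)) '' Set.Ici N).Infinite :=
    (Set.Ici_infinite N).image hinj
  refine hinf.mono ?_
  rintro x ⟨n, hn, rfl⟩
  exact h n hn

lemma eps_eq (a b : ℂ) (q : Sp) :
    ε a b q = Polynomial.eval b (q.map (Polynomial.evalRingHom a)) := by
  have hhom : ((ε a b : Sp →ₐ[ℂ] ℂ) : Sp →+* ℂ)
      = (Polynomial.evalRingHom b).comp (Polynomial.mapRingHom (Polynomial.evalRingHom a)) := by
    refine Polynomial.ringHom_ext (fun r => ?_) ?_
    · simp [ε]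
    · simp [ε, muv]
  exact congrArg (fun f : Sp →+* ℂ => f q) hhom

lemma two_var_vanish (q : Sp) (N N' : ℕ)
    (h : ∀ c d : ℕ, N ≤ c → N' ≤ d → ε (c : ℂ) (d : ℂ) q = 0) : q = 0 := by
  have hmap : ∀ c : ℕ, N ≤ c → q.map (Polynomial.evalRingHom (c : ℂ)) = 0 := by
    intro c hc
    refine poly_vanish N' _ (fun d hd => ?_)
    rw [← eps_eq]
    exact h c d hc hd
  refine Polynomial.ext fun i => ?_
  rw [Polynomial.coeff_zero]
  refine poly_vanish N (q.coeff i) (fun c hc => ?_)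
  have := congrArg (fun p : Polynomial ℂ => p.coeff i) (hmap c hc)
  simpa [Polynomial.coeff_map] using this

lemma keyCoeff (w : FA) (α β : ℤ × ℤ) (c d : ℕ)
    (hc : α.1.natAbs ≤ c) (hd : α.2.natAbs ≤ d) :
    ε (c : ℂ) (d : ℂ) ((ρS w (Finsupp.single α 1)) β)
      = (shInc c d (ρ1 w (MvPolynomial.monomial
          (Finsupp.single 0 (α.1 + c).toNat + Finsupp.single 1 (α.2 + d).toNat) 1))) β := by
  have hT : ε (c : ℂ) (d : ℂ) ((ρS w (Finsupp.single α 1)) β)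
      = (Tmap (c : ℂ) (d : ℂ) (ρS w (Finsupp.single α 1))) β := by
    simp [Tmap, Finsupp.mapRange_apply]
  rw [hT, claimA, Tmap_single, map_one]
  set u : Fin 2 →₀ ℕ :=
    Finsupp.single 0 (α.1 + c).toNat + Finsupp.single 1 (α.2 + d).toNat with hu
  have hu0 : ((u 0 : ℕ) : ℤ) = α.1 + c := by
    have h0 : (0 : ℤ) ≤ α.1 + c := by omega
    simp [hu, Int.toNat_of_nonneg h0]
  have hu1 : ((u 1 : ℕ) : ℤ) = α.2 + d := by
    have h0 : (0 : ℤ) ≤ α.2 + d := by omega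
    simp [hu, Int.toNat_of_nonneg h0]
  have hsh : (Finsupp.single α (1 : ℂ) : Lw) = shInc c d (MvPolynomial.monomial u 1) := by
    rw [shInc_monomial, hu0, hu1]
    congr 1
    rw [add_sub_cancel_right, add_sub_cancel_right]
  rw [hsh, claimB]

lemma keyLemma (w₁ w₂ : FA) (h : ρ1 w₁ = ρ1 w₂) : ρS w₁ = ρS w₂ := by
  have hsingle : ∀ α : ℤ × ℤ,
      ρS w₁ (Finsupp.single α 1) = ρS w₂ (Finsupp.single α 1) := by
    intro α
    refine Finsupp.ext fun β => ?_
    have hvan : (ρS w₁ (Finsupp.single α 1)) β - (ρS w₂ (Finsupp.single α 1)) β = 0 := by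
      refine two_var_vanish _ α.1.natAbs α.2.natAbs (fun c d hc hd => ?_)
      rw [map_sub, keyCoeff w₁ α β c d hc hd, keyCoeff w₂ α β c d hc hd, h, sub_self]
    exact sub_eq_zero.mp hvan
  refine LinearMap.ext fun m => ?_
  induction m using Finsupp.induction_linear with
  | zero => simp
  | add f g hf hg => rw [map_add, map_add, hf, hg]
  | single α s =>
    rw [show Finsupp.single α s = s • Finsupp.single α (1 : Sp) by
      rw [Finsupp.smul_single, smul_eq_mul, mul_one], map_smul, map_smul, hsingle]

def Ehat : FA := FreeAlgebra.ι ℂ 0 * FreeAlgebra.ι ℂ 2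
def Nhat : FA := FreeAlgebra.ι ℂ 0 * FreeAlgebra.ι ℂ 2 + FreeAlgebra.ι ℂ 1 * FreeAlgebra.ι ℂ 3
def s0 : Mw := Finsupp.single ((0 : ℤ), (0 : ℤ)) 1

lemma rhoS_E : ρS Ehat s0 = lam • s0 := by
  rw [Ehat, map_mul, Module.End.mul_apply]
  simp only [ρS, FreeAlgebra.lift_ι_apply]
  show mX0 (mD0 s0) = lam • s0
  rw [s0]
  rw [mD0_single, mX0_single]
  simp [cc, Finsupp.smul_single]

lemma rhoS_N : ρS Nhat s0 = (lam + muv) • s0 := by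
  rw [Nhat, map_add, LinearMap.add_apply, map_mul, map_mul, Module.End.mul_apply,
    Module.End.mul_apply]
  simp only [ρS, FreeAlgebra.lift_ι_apply]
  have h1 : mX0 (mD0 s0) = lam • s0 := by
    rw [s0, mD0_single, mX0_single]; simp [cc, Finsupp.smul_single]
  have h2 : mX1 (mD1 s0) = muv • s0 := by
    rw [s0, mD1_single, mX1_single]; simp [cc, Finsupp.smul_single]
  show mX0 (mD0 s0) + mX1 (mD1 s0) = (lam + muv) • s0
  rw [h1, h2, add_smul]

lemma rhoS_E_pow (k : ℕ) : ρS (Ehat ^ k) s0 = (lam ^ k) • s0 := by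
  induction k with
  | zero => simp
  | succ k ih =>
    rw [pow_succ, map_mul, Module.End.mul_apply, rhoS_E, map_smul, ih, smul_smul, ← pow_succ']

def toEnd : DW →ₐ[ℂ] Module.End ℂ P2 := Subalgebra.val Dsub

@[simp] lemma toEnd_x0 : toEnd x₀ = xop 0 := rfl
@[simp] lemma toEnd_x1 : toEnd x₁ = xop 1 := rfl
@[simp] lemma toEnd_d0 : toEnd δ₀ = dop 0 := rfl
@[simp] lemma toEnd_d1 : toEnd δ₁ = dop 1 := rfl

lemma rho1_E : ρ1 Ehat = xop 0 * dop 0 := by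
  rw [Ehat, map_mul]
  simp only [ρ1, FreeAlgebra.lift_ι_apply]
  rfl

lemma rho1_N : ρ1 Nhat = xop 0 * dop 0 + xop 1 * dop 1 := by
  rw [Nhat, map_add, map_mul, map_mul]
  simp only [ρ1, FreeAlgebra.lift_ι_apply]
  rfl

lemma rho1_ι0 : ρ1 (FreeAlgebra.ι ℂ 0) = xop 0 := by
  simp only [ρ1, FreeAlgebra.lift_ι_apply]; rfl
lemma rho1_ι1 : ρ1 (FreeAlgebra.ι ℂ 1) = xop 1 := by
  simp only [ρ1, FreeAlgebra.lift_ι_apply]; rfl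
lemma rho1_ι2 : ρ1 (FreeAlgebra.ι ℂ 2) = dop 0 := by
  simp only [ρ1, FreeAlgebra.lift_ι_apply]; rfl
lemma rho1_ι3 : ρ1 (FreeAlgebra.ι ℂ 3) = dop 1 := by
  simp only [ρ1, FreeAlgebra.lift_ι_apply]; rfl

lemma surjAux : Dsub ≤ ρ1.range := by
  unfold Dsub
  refine Algebra.adjoin_le ?_
  intro x hx
  simp only [Set.mem_insert_iff, Set.mem_singleton_iff] at hx
  rcases hx with rfl | rfl | rfl | rfl
  · exact ⟨FreeAlgebra.ι ℂ 0, rho1_ι0⟩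
  · exact ⟨FreeAlgebra.ι ℂ 1, rho1_ι1⟩
  · exact ⟨FreeAlgebra.ι ℂ 2, rho1_ι2⟩
  · exact ⟨FreeAlgebra.ι ℂ 3, rho1_ι3⟩

lemma surj (A : DW) : ∃ a : FA, ρ1 a = toEnd A := by
  obtain ⟨a, ha⟩ := surjAux A.2
  exact ⟨a, ha⟩

lemma not_mem_Kid (n : ℕ) : (x₀ * δ₀) ^ n ∉ Kid (n + 1) := by
  intro hmem
  unfold Kid at hmem
  rw [Submodule.mem_span_pair] at hmem
  obtain ⟨A, B, hAB⟩ := hmem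
  rw [smul_eq_mul, smul_eq_mul] at hAB
  obtain ⟨a, ha⟩ := surj A
  obtain ⟨b, hb⟩ := surj B
  have hρeq : ρ1 (Ehat ^ n) = ρ1 (a * Ehat ^ (n + 1) + b * Nhat) := by
    have hzz := congrArg toEnd hAB
    simp only [map_add, map_mul, map_pow, toEnd_x0, toEnd_x1, toEnd_d0, toEnd_d1] at hzz
    simp only [map_add, map_mul, map_pow, rho1_E, rho1_N, ha, hb]
    exact hzz.symm
  have h1 := keyLemma _ _ hρeq
  have h2 := congrArg (fun T : Module.End Sp Mw => T s0) h1
  simp only [map_add, map_mul, LinearMap.add_apply, Module.End.mul_apply] at h2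
  rw [rhoS_E_pow, rhoS_E_pow, rhoS_N, map_smul, map_smul] at h2
  have h00 := congrArg (fun m : Mw => m ((0 : ℤ), (0 : ℤ))) h2
  simp only [Finsupp.add_apply, Finsupp.smul_apply, smul_eq_mul] at h00
  have hs0 : s0 ((0 : ℤ), (0 : ℤ)) = 1 := by simp [s0]
  rw [hs0, mul_one] at h00
  have hη := congrArg (Polynomial.evalRingHom (-(Polynomial.X : Polynomial ℂ))) h00
  simp only [map_add, map_mul, map_pow] at hη
  have hlam : Polynomial.evalRingHom (-(Polynomial.X : Polynomial ℂ)) lam = Polynomial.X := by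
    simp [lam]
  have hmuv : Polynomial.evalRingHom (-(Polynomial.X : Polynomial ℂ)) muv
      = -Polynomial.X := by simp [muv]
  rw [hlam, hmuv, add_neg_cancel, zero_mul, add_zero] at hη
  have hcoeff := congrArg (fun p : Polynomial ℂ => p.coeff n) hη
  rw [mul_comm] at hcoeff
  simp only [Polynomial.coeff_X_pow, if_pos rfl, Polynomial.coeff_mul_X_pow'] at hcoeff
  simp at hcoeff

lemma Kid_chain (n : ℕ) : Kid (n + 1) < Kid n := by
  have hle : Kid (n + 1) ≤ Kid n := by
    unfold Kid
    refine Submodule.span_le.mpr ?_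
    intro x hx
    simp only [Set.mem_insert_iff, Set.mem_singleton_iff] at hx
    rcases hx with rfl | rfl
    · have h : (x₀ * δ₀) ^ (n + 1) = (x₀ * δ₀) • (x₀ * δ₀) ^ n := by
        rw [smul_eq_mul, ← pow_succ']
      rw [h]
      exact Submodule.smul_mem _ _ (Submodule.subset_span (Set.mem_insert _ _))
    · exact Submodule.subset_span (Set.mem_insert_iff.mpr (Or.inr rfl))
  refine lt_of_le_of_ne hle (fun he => not_mem_Kid n ?_)
  rw [he]
  exact Submodule.subset_span (Set.mem_insert _ _)

lemma Kid_anti : ∀ {i j : ℕ}, i ≤ j → Kid j ≤ Kid i := by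
  intro i j h
  exact antitone_nat_of_succ_le (fun n => (Kid_chain n).le) h

end Stmt17Aux

open Stmt17Aux in
theorem stmt_17 :
    -- the `K_n` form a strictly decreasing chain `K₀ ⊋ K₁ ⊋ K₂ ⊋ ⋯`
    (∀ n : ℕ, Kid (n + 1) < Kid n) ∧
    -- in particular `D/D∇` does not have finite length
    ¬ IsFiniteLength DW (DW ⧸ (Submodule.span DW {x₀ * δ₀ + x₁ * δ₁} : Submodule DW DW)) := by
  constructor
  · exact Kid_chain
  · intro hfl
    obtain ⟨hnoeth, hart⟩ := isFiniteLength_iff_isNoetherian_isArtinian.mp hfl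
    set p : Submodule DW DW := Submodule.span DW {x₀ * δ₀ + x₁ * δ₁} with hp
    have hple : ∀ n, p ≤ Kid n := by
      intro n
      rw [hp]
      refine Submodule.span_le.mpr ?_
      intro x hx
      simp only [Set.mem_singleton_iff] at hx
      subst hx
      unfold Kid
      exact Submodule.subset_span (Set.mem_insert_iff.mpr (Or.inr rfl))
    haveI := hart
    obtain ⟨k, hk⟩ := IsArtinian.monotone_stabilizes (R := DW) (M := DW ⧸ p)
      ⟨fun n => OrderDual.toDual (Submodule.map p.mkQ (Kid n)),
       fun i j hij => Submodule.map_mono (Kid_anti hij)⟩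
    have heq := hk (k + 1) (Nat.le_succ k)
    have hmap : Submodule.map p.mkQ (Kid k) = Submodule.map p.mkQ (Kid (k + 1)) := heq
    have hcom := congrArg (Submodule.comap p.mkQ) hmap
    rw [Submodule.comap_map_mkQ, Submodule.comap_map_mkQ,
      sup_eq_right.mpr (hple k), sup_eq_right.mpr (hple (k + 1))] at hcom
    exact absurd hcom.symm (ne_of_lt (Kid_chain k))

end
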